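/- arXiv:0704.1284 — 2 statements merged into one kernel-verified Lean document; each statement's English description precedes it below -/
import Mathlib

section
/- Under the change of variables (y1, y2, y3) = T(u, v, w), the system y1' = -k1 y1, y2' = k1 y1 + y2(G - ε y3), y3' = y2(k2 - ε y3) is equivalent to the normal form u' = (1 - k2/G) f(u,v,w), v' = G v + f(u,v,w), w' = -k1 w, where f(u,v,w) = -(ε/G)(v - k1 w)(k2 v + G(u + k2 w)). -/
theorem stmt_3 (k1 k2 G ε : ℝ) (hG : G ≠ 0) (hGk : G + k1 ≠ 0)
    (u v w : ℝ → ℝ)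
    (f : ℝ → ℝ → ℝ → ℝ)
    (hf : ∀ U V W, f U V W = -(ε / G) * (V - k1 * W) * (k2 * V + G * (U + k2 * W)))
    (y1 y2 y3 : ℝ → ℝ)
    (hy1 : ∀ t, y1 t = (G + k1) * w t)
    (hy2 : ∀ t, y2 t = v t - k1 * w t)
    (hy3 : ∀ t, y3 t = u t + (k2 / G) * v t + k2 * w t) :
    ((∀ t, HasDerivAt y1 (-k1 * y1 t) t) ∧
     (∀ t, HasDerivAt y2 (k1 * y1 t + y2 t * (G - ε * y3 t)) t) ∧
     (∀ t, HasDerivAt y3 (y2 t * (k2 - ε * y3 t)) t))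
    ↔
    ((∀ t, HasDerivAt u ((1 - k2 / G) * f (u t) (v t) (w t)) t) ∧
     (∀ t, HasDerivAt v (G * v t + f (u t) (v t) (w t)) t) ∧
     (∀ t, HasDerivAt w (-k1 * w t) t)) := by
  constructor
  · rintro ⟨h1, h2, h3⟩
    have hw : ∀ t, HasDerivAt w (-k1 * w t) t := by
      intro t
      have hwf : w = fun s => (G + k1)⁻¹ * y1 s := by
        funext s; rw [hy1 s]; field_simp
      have := (h1 t).const_mul ((G + k1)⁻¹)
      rw [← hwf] at this
      refine this.congr_deriv ?_
      rw [hy1 t]; field_simp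
    have hv : ∀ t, HasDerivAt v (G * v t + f (u t) (v t) (w t)) t := by
      intro t
      have hvf : v = fun s => y2 s + k1 * w s := by
        funext s; rw [hy2 s]; ring
      have := (h2 t).add ((hw t).const_mul k1)
      rw [show (y2 + fun y => k1 * w y) = v from hvf.symm] at this
      refine this.congr_deriv ?_
      rw [hf, hy1 t, hy2 t, hy3 t]; field_simp; ring
    refine ⟨?_, hv, hw⟩
    intro t
    have huf : u = fun s => y3 s - (k2 / G) * v s - k2 * w s := by
      funext s; rw [hy3 s]; ring
    have := ((h3 t).sub ((hv t).const_mul (k2 / G))).sub ((hw t).const_mul k2)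
    rw [show ((y3 - fun y => k2 / G * v y) - fun y => k2 * w y) = u from huf.symm] at this
    refine this.congr_deriv ?_
    rw [hf, hy2 t, hy3 t]; field_simp; ring
  · rintro ⟨hu, hv, hw⟩
    refine ⟨?_, ?_, ?_⟩ <;> intro t
    · have hyf : y1 = fun s => (G + k1) * w s := funext hy1
      have := (hw t).const_mul (G + k1)
      rw [← hyf] at this
      refine this.congr_deriv ?_
      rw [hy1 t]; ring
    · have hyf : y2 = fun s => v s - k1 * w s := funext hy2
      have := (hv t).sub ((hw t).const_mul k1)
      rw [show (v - fun y => k1 * w y) = y2 from hyf.symm] at this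
      refine this.congr_deriv ?_
      rw [hf, hy1 t, hy2 t, hy3 t]; field_simp; ring
    · have hyf : y3 = fun s => u s + (k2 / G) * v s + k2 * w s := funext hy3
      have := ((hu t).add ((hv t).const_mul (k2 / G))).add ((hw t).const_mul k2)
      rw [show ((u + fun y => k2 / G * v y) + fun y => k2 * w y) = y3 from hyf.symm] at this
      refine this.congr_deriv ?_
      rw [hf, hy2 t, hy3 t]; field_simp; ring
end

section
/- The vector field Y(y1,y2,y3) = ((k1/ε) y1, -(k1/ε) y1 + y2 y3, -(k2/ε) y2 + y2 y3) commutes with the G = 0 system vector field F(y1,y2,y3) = (-k1 y1, k1 y1 - ε y2 y3, k2 y2 - ε y2 y3); i.e., their Lie bracket [Y, F] = DF·Y - DY·F vanishes identically. Hence Y generates a Lie point symmetry of the system. -/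
theorem stmt_13 (k1 k2 ε : ℝ) (hε : ε ≠ 0)
    (F Y : ℝ × ℝ × ℝ → ℝ × ℝ × ℝ)
    (hF : ∀ y : ℝ × ℝ × ℝ,
      F y = (-k1 * y.1, k1 * y.1 - ε * y.2.1 * y.2.2, k2 * y.2.1 - ε * y.2.1 * y.2.2))
    (hY : ∀ y : ℝ × ℝ × ℝ,
      Y y = ((k1 / ε) * y.1, -(k1 / ε) * y.1 + y.2.1 * y.2.2,
             -(k2 / ε) * y.2.1 + y.2.1 * y.2.2)) :
    ∀ y : ℝ × ℝ × ℝ, fderiv ℝ F y (Y y) - fderiv ℝ Y y (F y) = 0 := by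
  have hF' : F = fun y : ℝ × ℝ × ℝ =>
      (-k1 * y.1, k1 * y.1 - ε * y.2.1 * y.2.2, k2 * y.2.1 - ε * y.2.1 * y.2.2) :=
    funext hF
  have hY' : Y = fun y : ℝ × ℝ × ℝ =>
      ((k1 / ε) * y.1, -(k1 / ε) * y.1 + y.2.1 * y.2.2,
       -(k2 / ε) * y.2.1 + y.2.1 * y.2.2) := funext hY
  subst hF' hY'
  intro y
  have h1 : HasFDerivAt (fun y : ℝ × ℝ × ℝ => y.1)
      (ContinuousLinearMap.fst ℝ ℝ (ℝ × ℝ)) y := hasFDerivAt_fst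
  have h2 : HasFDerivAt (fun y : ℝ × ℝ × ℝ => y.2.1)
      ((ContinuousLinearMap.fst ℝ ℝ ℝ).comp (ContinuousLinearMap.snd ℝ ℝ (ℝ × ℝ))) y :=
    hasFDerivAt_fst.comp y hasFDerivAt_snd
  have h3 : HasFDerivAt (fun y : ℝ × ℝ × ℝ => y.2.2)
      ((ContinuousLinearMap.snd ℝ ℝ ℝ).comp (ContinuousLinearMap.snd ℝ ℝ (ℝ × ℝ))) y :=
    hasFDerivAt_snd.comp y hasFDerivAt_snd
  have hmul := h2.mul h3
  have hDF := ((h1.const_mul (-k1)).prodMk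
    (((h1.const_mul k1).sub (hmul.const_mul ε)).prodMk
      ((h2.const_mul k2).sub (hmul.const_mul ε))))
  have hDY := ((h1.const_mul (k1/ε)).prodMk
    (((h1.const_mul (-(k1/ε))).add hmul).prodMk
      ((h2.const_mul (-(k2/ε))).add hmul)))
  simp only [Pi.sub_apply, Pi.add_apply, Pi.mul_apply] at hDF hDY
  simp only [mul_assoc]
  rw [hDF.fderiv, hDY.fderiv]
  simp only [ContinuousLinearMap.prod_apply, ContinuousLinearMap.add_apply,
    ContinuousLinearMap.sub_apply, ContinuousLinearMap.smul_apply,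
    ContinuousLinearMap.coe_comp', Function.comp_apply,
    ContinuousLinearMap.coe_fst', ContinuousLinearMap.coe_snd', smul_eq_mul]
  refine Prod.ext ?_ (Prod.ext ?_ ?_) <;> simp <;> field_simp <;> ring
end
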